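/- Let m ≥ 1 be an integer and let α ∈ (0, 1]. Consider the family v of 2m positive reals consisting of one entry equal to 1 − ((2m−1)/(2m))·α and 2m − 1 entries each equal to α/(2m). Then (1 + 1/α) · Ent(v) ≥ (1/2) · ln(2m). -/

import Mathlib

open Finset Real
open scoped Classical

/-- Entropy-like function `Ent(a_S) = -∑_{i∈S} (a_i/A) ln (a_i/A)` with `A = ∑_{j∈S} a_j`. -/
noncomputable def ent {ι : Type*} (S : Finset ι) (a : ι → ℝ) : ℝ :=
  -∑ i ∈ S, (a i / ∑ j ∈ S, a j) * Real.log (a i / ∑ j ∈ S, a j)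


/-- **Entropy lower bound for the extremal family.** For `m ≥ 1` and `α ∈ (0, 1]`, the
family of `2m` positive reals with one entry `1 - ((2m-1)/(2m))α` and `2m - 1` entries
`α/(2m)` has entropy at least `ln(2m)/(2(1 + 1/α))`. -/
theorem stmt_12 (m : ℕ) (hm : 1 ≤ m) (α : ℝ) (hα0 : 0 < α) (hα1 : α ≤ 1) :
    (1 + 1 / α) *
        ent Finset.univ (fun i : Fin (2 * m) =>
          if (i : ℕ) = 0 then 1 - ((2 * m - 1 : ℝ) / (2 * m)) * α else α / (2 * m))
      ≥ (1 / 2) * Real.log (2 * m) := by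
  haveI : NeZero (2 * m) := ⟨by omega⟩
  have hm1 : (1:ℝ) ≤ (m:ℝ) := by exact_mod_cast hm
  obtain ⟨N, hNdef⟩ : ∃ N : ℝ, N = 2 * (m:ℝ) := ⟨_, rfl⟩
  have hN2 : (2:ℝ) ≤ N := by rw [hNdef]; linarith
  have hN0 : (0:ℝ) < N := by linarith
  obtain ⟨p, hpdef⟩ : ∃ p : ℝ, p = 1 - ((N - 1) / N) * α := ⟨_, rfl⟩
  obtain ⟨q, hqdef⟩ : ∃ q : ℝ, q = α / N := ⟨_, rfl⟩
  have hsum : ∀ a b : ℝ, (∑ i : Fin (2*m), (if (i:ℕ) = 0 then a else b)) = a + (N - 1) * b := by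
    intro a b
    have h1 : (∑ i : Fin (2*m), (if (i:ℕ) = 0 then a else b))
        = ∑ i : Fin (2*m), ((if i = 0 then a - b else 0) + b) := by
      apply Finset.sum_congr rfl
      intro i _
      rcases eq_or_ne i 0 with h | h
      · simp [h]
      · have hv : (i:ℕ) ≠ 0 := fun h' => h (Fin.ext (by simp [h']))
        simp [h, hv]
    rw [h1, Finset.sum_add_distrib]
    simp [Finset.sum_ite_eq', hNdef]
    ring
  have hq0 : 0 < q := by rw [hqdef]; exact div_pos hα0 hN0
  have hp0 : 0 < p := by
    have h1 : ((N - 1) / N) * α ≤ (N - 1) / N :=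
      mul_le_of_le_one_right (div_nonneg (by linarith) (by linarith)) hα1
    have h2 : (N - 1) / N < 1 := by rw [div_lt_one hN0]; linarith
    rw [hpdef]; linarith
  have hp1 : p ≤ 1 := by
    have : 0 ≤ ((N - 1) / N) * α :=
      mul_nonneg (div_nonneg (by linarith) (by linarith)) hα0.le
    rw [hpdef]; linarith
  have hA : (∑ j : Fin (2*m), (if (j:ℕ) = 0 then p else q)) = 1 := by
    rw [hsum, hpdef, hqdef]
    field_simp
    ring
  -- compute ent
  have hent : ent Finset.univ (fun i : Fin (2 * m) =>
      if (i : ℕ) = 0 then 1 - ((2 * m - 1 : ℝ) / (2 * m)) * α else α / (2 * m))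
      = -(p * Real.log p + (N - 1) * (q * Real.log q)) := by
    unfold ent
    have hfun : (fun i : Fin (2 * m) =>
        if (i : ℕ) = 0 then 1 - ((2 * m - 1 : ℝ) / (2 * m)) * α else α / (2 * m))
        = fun i : Fin (2 * m) => if (i : ℕ) = 0 then p else q := by
      funext i
      rw [hpdef, hqdef, hNdef]
    rw [hfun, hA]
    simp only [div_one]
    have hcong : (∑ i : Fin (2*m), (if (i:ℕ) = 0 then p else q) *
        Real.log (if (i:ℕ) = 0 then p else q))
        = ∑ i : Fin (2*m), (if (i:ℕ) = 0 then p * Real.log p else q * Real.log q) := by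
      apply Finset.sum_congr rfl
      intro i _
      by_cases h : (i:ℕ) = 0 <;> simp [h]
    rw [hcong, hsum]
  rw [hent]
  -- key bounds
  have hlogN : 0 ≤ Real.log N := Real.log_nonneg (by linarith)
  have hplog : p * Real.log p ≤ 0 :=
    mul_nonpos_of_nonneg_of_nonpos hp0.le (Real.log_nonpos hp0.le hp1)
  have hlogq : Real.log q = Real.log α - Real.log N := by
    rw [hqdef, Real.log_div hα0.ne' hN0.ne']
  have hlogα : Real.log α ≤ 0 := Real.log_nonpos hα0.le hα1
  have hqN : q * N = α := by rw [hqdef]; field_simp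
  have hq2 : α / 2 ≤ (N - 1) * q := by nlinarith [mul_nonneg hq0.le (by linarith : (0:ℝ) ≤ N - 2)]
  have hkey : (α / 2) * Real.log N ≤ (N - 1) * (q * (- Real.log q)) := by
    have h1 : Real.log N ≤ - Real.log q := by rw [hlogq]; linarith
    have h2 : (α / 2) * Real.log N ≤ ((N - 1) * q) * Real.log N :=
      mul_le_mul_of_nonneg_right hq2 hlogN
    have h3 : ((N - 1) * q) * Real.log N ≤ ((N - 1) * q) * (- Real.log q) := by
      apply mul_le_mul_of_nonneg_left h1
      nlinarith
    nlinarith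
  have hEnt2 : (α / 2) * Real.log N ≤ -(p * Real.log p + (N - 1) * (q * Real.log q)) := by
    have hr : (N - 1) * (q * (- Real.log q)) = -((N - 1) * (q * Real.log q)) := by ring
    linarith [hkey, hplog, hr.le, hr.ge]
  have hEnt0 : 0 ≤ -(p * Real.log p + (N - 1) * (q * Real.log q)) := by
    have : 0 ≤ (α / 2) * Real.log N := by positivity
    linarith
  have h1α : 1 / α ≤ 1 + 1 / α := by linarith
  calc (1 + 1/α) * (-(p * Real.log p + (N - 1) * (q * Real.log q)))
      ≥ (1/α) * (-(p * Real.log p + (N - 1) * (q * Real.log q))) :=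
        mul_le_mul_of_nonneg_right h1α hEnt0
    _ ≥ (1/α) * ((α/2) * Real.log N) := by
        apply mul_le_mul_of_nonneg_left hEnt2
        positivity
    _ = (1/2) * Real.log N := by field_simp
    _ = (1/2) * Real.log (2 * m) := by rw [hNdef]
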